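/- Discrete BV bound (Lemma 3.2): there exists a constant C_T, depending only on γ and T, such that for every n with 0 ≤ n ≤ M+1 the solution of the scheme satisfies |uⁿ|_{BV} ≤ C_T·(|u⁰|_{BV} + V_α + V_β + ‖u⁰‖_∞ + A + B); one may take C_T = max(1, 3γT e^{γT}). -/

import Mathlib

set_option maxHeartbeats 2000000 in
/-- Discrete BV bound (Lemma 3.2): with `C_T = max (1, 3 γ T e^{γT})`, a constant
depending only on `γ` and `T`, for every `n ≤ M + 1` the solution of the scheme
satisfies `|uⁿ|_{BV} ≤ C_T (|u⁰|_{BV} + V_α + V_β + ‖u⁰‖_∞ + A + B)`. -/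
theorem stmt_5 (N M : ℕ) (hN : 3 ≤ N) (T γ Δx Δt lam : ℝ)
    (hT : 0 < T) (hγ : 0 < γ)
    (hΔx : Δx = 1 / N) (hΔt : Δt = T / (M + 1)) (hlam : lam = Δt / Δx)
    (F₁ F₂ : ℝ → ℝ) (hF₁ : ContDiff ℝ 1 F₁) (hF₂ : ContDiff ℝ 1 F₂)
    (hmono₁ : ∀ w, 0 ≤ deriv F₁ w) (hmono₂ : ∀ w, deriv F₂ w ≤ 0)
    (hCFL : ∀ w, lam * (deriv F₁ w - deriv F₂ w) ≤ 1)
    (u : ℕ → ℕ → ℝ) (P : ℕ → ℕ → ℝ)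
    (hP : ∀ n j, P n j = Δx * (u n 0 / 2 + ∑ i ∈ Finset.Ico 1 j, u n i + u n j / 2))
    (hscheme : ∀ n, n ≤ M → ∀ j, 1 ≤ j → j ≤ N - 1 →
      u (n + 1) j = u n j
        - lam * ((F₁ (u n j) + F₂ (u n (j + 1))) - (F₁ (u n (j - 1)) + F₂ (u n j)))
        + γ * Δt * P n j)
    (A B Vα Vβ : ℝ) (hA : 0 ≤ A) (hB : 0 ≤ B) (hVα : 0 ≤ Vα) (hVβ : 0 ≤ Vβ)
    (hbdL : ∀ n, n ≤ M + 1 → |u n 0| ≤ A)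
    (hbdR : ∀ n, n ≤ M + 1 → |u n N| ≤ B)
    (hbvL : ∑ n ∈ Finset.range (M + 1), |u (n + 1) 0 - u n 0| ≤ Vα)
    (hbvR : ∑ n ∈ Finset.range (M + 1), |u (n + 1) N - u n N| ≤ Vβ) :
    ∀ n, n ≤ M + 1 →
      ∑ j ∈ Finset.range N, |u n (j + 1) - u n j|
        ≤ max 1 (3 * γ * T * Real.exp (γ * T)) *
          ((∑ j ∈ Finset.range N, |u 0 (j + 1) - u 0 j|) + Vα + Vβ
            + (Finset.range (N + 1)).sup' Finset.nonempty_range_add_one (fun j => |u 0 j|)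
            + A + B) := by
  obtain ⟨m, rfl⟩ : ∃ m, N = m + 3 := ⟨N - 3, by omega⟩
  -- basic positivity
  have hcast : ((m + 3 : ℕ) : ℝ) = (m : ℝ) + 3 := by push_cast; ring
  have hΔx' : Δx = 1 / ((m : ℝ) + 3) := by rw [hΔx, hcast]
  have hΔx0 : 0 < Δx := by rw [hΔx']; positivity
  have hΔt0 : 0 < Δt := by rw [hΔt]; positivity
  have hlam0 : 0 ≤ lam := by rw [hlam]; positivity
  -- monotone pieces
  have hdF₁ : Differentiable ℝ F₁ := hF₁.differentiable one_ne_zero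
  have hdF₂ : Differentiable ℝ F₂ := hF₂.differentiable one_ne_zero
  have hF1mono : Monotone F₁ := monotone_of_deriv_nonneg hdF₁ hmono₁
  have hF2anti : Antitone F₂ := antitone_of_deriv_nonpos hdF₂ hmono₂
  set G : ℝ → ℝ := fun w => w - lam * F₁ w + lam * F₂ w with hGdef
  have hGmono : Monotone G := by
    apply monotone_of_deriv_nonneg
    · exact (differentiable_id.sub (hdF₁.const_mul lam)).add (hdF₂.const_mul lam)
    · intro x
      have h1 : HasDerivAt F₁ (deriv F₁ x) x := (hdF₁ x).hasDerivAt
      have h2 : HasDerivAt F₂ (deriv F₂ x) x := (hdF₂ x).hasDerivAt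
      have hG : HasDerivAt G (1 - lam * deriv F₁ x + lam * deriv F₂ x) x :=
        ((hasDerivAt_id x).sub (h1.const_mul lam)).add (h2.const_mul lam)
      rw [hG.deriv]
      have h := hCFL x
      rw [mul_sub] at h
      linarith
  have hGid : ∀ w, G w + lam * F₁ w - lam * F₂ w = w := by
    intro w; simp only [hGdef]; ring
  have hkey : ∀ a b : ℝ, |G b - G a| + lam * |F₁ b - F₁ a| + lam * |F₂ b - F₂ a| = |b - a| := by
    intro a b
    rcases le_total a b with h | h
    · rw [abs_of_nonneg (sub_nonneg.mpr (hGmono h)),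
        abs_of_nonneg (sub_nonneg.mpr (hF1mono h)),
        abs_of_nonpos (sub_nonpos.mpr (hF2anti h)),
        abs_of_nonneg (sub_nonneg.mpr h)]
      simp only [hGdef]; ring
    · rw [abs_of_nonpos (sub_nonpos.mpr (hGmono h)),
        abs_of_nonpos (sub_nonpos.mpr (hF1mono h)),
        abs_of_nonneg (sub_nonneg.mpr (hF2anti h)),
        abs_of_nonpos (sub_nonpos.mpr h)]
      simp only [hGdef]; ring
  -- sup norm
  set K : ℕ → ℝ := fun n =>
    (Finset.range (m + 3 + 1)).sup' Finset.nonempty_range_add_one (fun j => |u n j|) with hKdef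
  have hKbound : ∀ n j, j ≤ m + 3 → |u n j| ≤ K n := by
    intro n j hj
    exact Finset.le_sup' (fun j => |u n j|) (Finset.mem_range.mpr (by omega))
  have hK0 : ∀ n, 0 ≤ K n := fun n => le_trans (abs_nonneg _) (hKbound n 0 (by omega))
  -- bound on P
  have hPb : ∀ n j, j ≤ m + 3 → |P n j| ≤ K n := by
    intro n j hj
    rw [hP, abs_mul, abs_of_nonneg hΔx0.le]
    have h1 : |∑ i ∈ Finset.Ico 1 j, u n i| ≤ ((Finset.Ico 1 j).card : ℝ) * K n := by
      calc |∑ i ∈ Finset.Ico 1 j, u n i| ≤ ∑ i ∈ Finset.Ico 1 j, |u n i| :=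
            Finset.abs_sum_le_sum_abs _ _
        _ ≤ (Finset.Ico 1 j).card • K n := Finset.sum_le_card_nsmul _ _ _
            (fun i hi => hKbound n i (by have := Finset.mem_Ico.mp hi; omega))
        _ = ((Finset.Ico 1 j).card : ℝ) * K n := nsmul_eq_mul _ _
    have hcard : ((Finset.Ico 1 j).card : ℝ) ≤ (m : ℝ) + 2 := by
      rw [Nat.card_Ico]
      exact_mod_cast (by omega : j - 1 ≤ m + 2)
    have h0 := hKbound n 0 (by omega)
    have hjb := hKbound n j hj
    have habs1 := abs_add_le (u n 0 / 2 + ∑ i ∈ Finset.Ico 1 j, u n i) (u n j / 2)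
    have habs2 := abs_add_le (u n 0 / 2) (∑ i ∈ Finset.Ico 1 j, u n i)
    have hd1 : |u n 0 / 2| = |u n 0| / 2 := by rw [abs_div, abs_two]
    have hd2 : |u n j / 2| = |u n j| / 2 := by rw [abs_div, abs_two]
    have hcardK : ((Finset.Ico 1 j).card : ℝ) * K n ≤ ((m : ℝ) + 2) * K n :=
      mul_le_mul_of_nonneg_right hcard (hK0 n)
    have hinner : |u n 0 / 2 + ∑ i ∈ Finset.Ico 1 j, u n i + u n j / 2| ≤ ((m : ℝ) + 3) * K n := by
      rw [hd1] at habs2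
      rw [hd2] at habs1
      nlinarith [hK0 n]
    calc Δx * |u n 0 / 2 + ∑ i ∈ Finset.Ico 1 j, u n i + u n j / 2|
        ≤ Δx * (((m : ℝ) + 3) * K n) := mul_le_mul_of_nonneg_left hinner hΔx0.le
      _ = K n := by rw [hΔx']; field_simp
  -- P differences
  have hPdiff : ∀ n j, 1 ≤ j → P n (j + 1) - P n j = Δx * ((u n j + u n (j + 1)) / 2) := by
    intro n j hj
    rw [hP, hP, Finset.sum_Ico_succ_top hj]
    ring
  -- rewritten scheme
  have hS : ∀ n, n ≤ M → ∀ j, j ≤ m + 1 →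
      u (n + 1) (j + 1) =
        G (u n (j + 1)) + lam * F₁ (u n j) - lam * F₂ (u n (j + 2)) + γ * Δt * P n (j + 1) := by
    intro n hn j hj
    have h := hscheme n hn (j + 1) (by omega) (by omega)
    rw [h]
    simp only [hGdef, Nat.add_sub_cancel]
    ring
  -- L∞ bound
  have hE : ∀ n, n ≤ M + 1 → K n ≤ (1 + γ * Δt) ^ n * (K 0 + A + B) := by
    intro n
    induction n with
    | zero =>
      intro _
      have := hK0 0
      nlinarith
    | succ n ih =>
      intro hn
      have hn' : n ≤ M := by omega
      have ihn := ih (by omega)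
      have hbase : (0 : ℝ) ≤ K 0 + A + B := by have := hK0 0; linarith
      have hpow1 : (1 : ℝ) ≤ (1 + γ * Δt) ^ (n + 1) := by
        have h1 : (1 : ℝ) ≤ 1 + γ * Δt := by nlinarith
        calc (1 : ℝ) = 1 ^ (n + 1) := (one_pow _).symm
          _ ≤ (1 + γ * Δt) ^ (n + 1) := pow_le_pow_left₀ (by norm_num) h1 _
      apply Finset.sup'_le
      intro j hj
      rw [Finset.mem_range] at hj
      rcases Nat.eq_zero_or_pos j with rfl | hj1
      · calc |u (n + 1) 0| ≤ A := hbdL (n + 1) (by omega)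
          _ ≤ 1 * (K 0 + A + B) := by nlinarith [hK0 0]
          _ ≤ (1 + γ * Δt) ^ (n + 1) * (K 0 + A + B) :=
            mul_le_mul_of_nonneg_right hpow1 hbase
      rcases eq_or_lt_of_le (by omega : j ≤ m + 3) with rfl | hjlt
      · calc |u (n + 1) (m + 3)| ≤ B := hbdR (n + 1) (by omega)
          _ ≤ 1 * (K 0 + A + B) := by nlinarith [hK0 0]
          _ ≤ (1 + γ * Δt) ^ (n + 1) * (K 0 + A + B) :=
            mul_le_mul_of_nonneg_right hpow1 hbase
      obtain ⟨i, rfl⟩ : ∃ i, j = i + 1 := ⟨j - 1, by omega⟩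
      have him : i ≤ m + 1 := by omega
      rw [hS n hn' i him]
      have h1 := abs_le.mp (hKbound n (i + 1) (by omega))
      have h2 := abs_le.mp (hKbound n i (by omega))
      have h3 := abs_le.mp (hKbound n (i + 2) (by omega))
      have h4 := abs_le.mp (hPb n (i + 1) (by omega))
      have hγΔt : (0 : ℝ) ≤ γ * Δt := by positivity
      have hup : G (u n (i + 1)) + lam * F₁ (u n i) - lam * F₂ (u n (i + 2)) + γ * Δt * P n (i + 1)
          ≤ (1 + γ * Δt) * K n := by
        have e1 : G (u n (i + 1)) ≤ G (K n) := hGmono h1.2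
        have e2 : lam * F₁ (u n i) ≤ lam * F₁ (K n) :=
          mul_le_mul_of_nonneg_left (hF1mono h2.2) hlam0
        have e3 : lam * F₂ (K n) ≤ lam * F₂ (u n (i + 2)) :=
          mul_le_mul_of_nonneg_left (hF2anti h3.2) hlam0
        have e4 : γ * Δt * P n (i + 1) ≤ γ * Δt * K n :=
          mul_le_mul_of_nonneg_left h4.2 hγΔt
        have := hGid (K n)
        linarith
      have hlo : -((1 + γ * Δt) * K n)
          ≤ G (u n (i + 1)) + lam * F₁ (u n i) - lam * F₂ (u n (i + 2)) + γ * Δt * P n (i + 1) := by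
        have e1 : G (-K n) ≤ G (u n (i + 1)) := hGmono h1.1
        have e2 : lam * F₁ (-K n) ≤ lam * F₁ (u n i) :=
          mul_le_mul_of_nonneg_left (hF1mono h2.1) hlam0
        have e3 : lam * F₂ (u n (i + 2)) ≤ lam * F₂ (-K n) :=
          mul_le_mul_of_nonneg_left (hF2anti h3.1) hlam0
        have e4 : γ * Δt * (-K n) ≤ γ * Δt * P n (i + 1) :=
          mul_le_mul_of_nonneg_left h4.1 hγΔt
        have := hGid (-K n)
        linarith
      have : |G (u n (i + 1)) + lam * F₁ (u n i) - lam * F₂ (u n (i + 2)) + γ * Δt * P n (i + 1)|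
          ≤ (1 + γ * Δt) * K n := abs_le.mpr ⟨hlo, hup⟩
      calc |G (u n (i + 1)) + lam * F₁ (u n i) - lam * F₂ (u n (i + 2)) + γ * Δt * P n (i + 1)|
          ≤ (1 + γ * Δt) * K n := this
        _ ≤ (1 + γ * Δt) * ((1 + γ * Δt) ^ n * (K 0 + A + B)) :=
            mul_le_mul_of_nonneg_left ihn (by linarith [hγΔt])
        _ = (1 + γ * Δt) ^ (n + 1) * (K 0 + A + B) := by ring

  -- total variation
  set TV : ℕ → ℝ := fun n => ∑ j ∈ Finset.range (m + 3), |u n (j + 1) - u n j| with hTVdef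
  have habs4 : ∀ w x y z : ℝ, |w + x + y + z| ≤ |w| + |x| + |y| + |z| := by
    intro w x y z
    have h1 := abs_add_le (w + x + y) z
    have h2 := abs_add_three w x y
    linarith
  have habs5 : ∀ v w x y z : ℝ, |v + w + x + y + z| ≤ |v| + |w| + |x| + |y| + |z| := by
    intro v w x y z
    have h1 := abs_add_le (v + w + x + y) z
    have h2 := habs4 v w x y
    linarith
  have hdecompMid : ∀ f : ℕ → ℝ, ∑ j ∈ Finset.range (m+3), f j
      = (∑ j ∈ Finset.range (m+1), f (j+1)) + f 0 + f (m+2) := by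
    intro f
    rw [show m+3 = (m+2)+1 from rfl, Finset.sum_range_succ,
      show m+2 = (m+1)+1 from rfl, Finset.sum_range_succ']
  have hdecompTop : ∀ f : ℕ → ℝ, ∑ j ∈ Finset.range (m+3), f j
      = (∑ j ∈ Finset.range (m+1), f j) + f (m+1) + f (m+2) := by
    intro f
    rw [show m+3 = (m+2)+1 from rfl, Finset.sum_range_succ,
      show m+2 = (m+1)+1 from rfl, Finset.sum_range_succ]
  have hdecompBot : ∀ f : ℕ → ℝ, ∑ j ∈ Finset.range (m+3), f j
      = (∑ j ∈ Finset.range (m+1), f (j+2)) + f 0 + f 1 := by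
    intro f
    rw [show m+3 = (m+2)+1 from rfl, Finset.sum_range_succ',
      show m+2 = (m+1)+1 from rfl, Finset.sum_range_succ']
    ring
  have hγΔt0 : (0:ℝ) ≤ γ * Δt := by positivity
  have hstep : ∀ n, n ≤ M → TV (n+1) ≤ TV n + |u (n+1) 0 - u n 0|
      + |u (n+1) (m+3) - u n (m+3)| + 3 * (γ*Δt) * K n := by
    intro n hn
    have h0 : |u (n+1) 1 - u (n+1) 0| ≤
        |G (u n 1) - G (u n 0)|
        + (lam * |F₂ (u n 1) - F₂ (u n 0)| + lam * |F₂ (u n 2) - F₂ (u n 1)|)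
        + γ*Δt*K n + |u (n+1) 0 - u n 0| := by
      have e : u (n+1) 1 = G (u n 1) + lam * F₁ (u n 0) - lam * F₂ (u n 2) + γ * Δt * P n 1 :=
        hS n hn 0 (by omega)
      have hrw : u (n+1) 1 - u (n+1) 0 =
          (G (u n 1) - G (u n 0)) + lam * (F₂ (u n 0) - F₂ (u n 1))
          + lam * (F₂ (u n 1) - F₂ (u n 2)) + γ*Δt*P n 1 + (u n 0 - u (n+1) 0) := by
        rw [e]; simp only [hGdef]; ring
      rw [hrw]
      have t := habs5 (G (u n 1) - G (u n 0)) (lam * (F₂ (u n 0) - F₂ (u n 1)))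
        (lam * (F₂ (u n 1) - F₂ (u n 2))) (γ*Δt*P n 1) (u n 0 - u (n+1) 0)
      have e1 : |lam * (F₂ (u n 0) - F₂ (u n 1))| = lam * |F₂ (u n 1) - F₂ (u n 0)| := by
        rw [abs_mul, abs_of_nonneg hlam0, abs_sub_comm]
      have e2 : |lam * (F₂ (u n 1) - F₂ (u n 2))| = lam * |F₂ (u n 2) - F₂ (u n 1)| := by
        rw [abs_mul, abs_of_nonneg hlam0, abs_sub_comm]
      have e3 : |γ*Δt*P n 1| ≤ γ*Δt*K n := by
        rw [abs_mul, abs_of_nonneg hγΔt0]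
        exact mul_le_mul_of_nonneg_left (hPb n 1 (by omega)) hγΔt0
      have e4 : |u n 0 - u (n+1) 0| = |u (n+1) 0 - u n 0| := abs_sub_comm _ _
      linarith
    have htop : |u (n+1) (m+3) - u (n+1) (m+2)| ≤
        |G (u n (m+3)) - G (u n (m+2))|
        + (lam * |F₁ (u n (m+2)) - F₁ (u n (m+1))| + lam * |F₁ (u n (m+3)) - F₁ (u n (m+2))|)
        + γ*Δt*K n + |u (n+1) (m+3) - u n (m+3)| := by
      have e : u (n+1) (m+2) = G (u n (m+2)) + lam * F₁ (u n (m+1))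
          - lam * F₂ (u n (m+3)) + γ * Δt * P n (m+2) := hS n hn (m+1) (by omega)
      have hrw : u (n+1) (m+3) - u (n+1) (m+2) =
          (u (n+1) (m+3) - u n (m+3)) + (G (u n (m+3)) - G (u n (m+2)))
          + lam * (F₁ (u n (m+2)) - F₁ (u n (m+1))) + lam * (F₁ (u n (m+3)) - F₁ (u n (m+2)))
          + (-(γ*Δt*P n (m+2))) := by
        rw [e]; simp only [hGdef]; ring
      rw [hrw]
      have t := habs5 (u (n+1) (m+3) - u n (m+3)) (G (u n (m+3)) - G (u n (m+2)))
        (lam * (F₁ (u n (m+2)) - F₁ (u n (m+1)))) (lam * (F₁ (u n (m+3)) - F₁ (u n (m+2))))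
        (-(γ*Δt*P n (m+2)))
      have e1 : |lam * (F₁ (u n (m+2)) - F₁ (u n (m+1)))|
          = lam * |F₁ (u n (m+2)) - F₁ (u n (m+1))| := by
        rw [abs_mul, abs_of_nonneg hlam0]
      have e2 : |lam * (F₁ (u n (m+3)) - F₁ (u n (m+2)))|
          = lam * |F₁ (u n (m+3)) - F₁ (u n (m+2))| := by
        rw [abs_mul, abs_of_nonneg hlam0]
      have e3 : |(-(γ*Δt*P n (m+2)))| ≤ γ*Δt*K n := by
        rw [abs_neg, abs_mul, abs_of_nonneg hγΔt0]
        exact mul_le_mul_of_nonneg_left (hPb n (m+2) (by omega)) hγΔt0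
      linarith
    have hint : ∀ j, j ≤ m → |u (n+1) (j+2) - u (n+1) (j+1)| ≤
        |G (u n (j+2)) - G (u n (j+1))| + lam * |F₁ (u n (j+1)) - F₁ (u n j)|
        + lam * |F₂ (u n (j+3)) - F₂ (u n (j+2))| + γ*Δt*(Δx*K n) := by
      intro j hj
      have e1 : u (n+1) (j+1) = G (u n (j+1)) + lam * F₁ (u n j)
          - lam * F₂ (u n (j+2)) + γ * Δt * P n (j+1) := hS n hn j (by omega)
      have e2 : u (n+1) (j+2) = G (u n (j+2)) + lam * F₁ (u n (j+1))
          - lam * F₂ (u n (j+3)) + γ * Δt * P n (j+2) := hS n hn (j+1) (by omega)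
      have hrw : u (n+1) (j+2) - u (n+1) (j+1) =
          (G (u n (j+2)) - G (u n (j+1))) + lam * (F₁ (u n (j+1)) - F₁ (u n j))
          + lam * (F₂ (u n (j+2)) - F₂ (u n (j+3))) + γ*Δt*(P n (j+2) - P n (j+1)) := by
        rw [e1, e2]; ring
      rw [hrw]
      have t := habs4 (G (u n (j+2)) - G (u n (j+1))) (lam * (F₁ (u n (j+1)) - F₁ (u n j)))
        (lam * (F₂ (u n (j+2)) - F₂ (u n (j+3)))) (γ*Δt*(P n (j+2) - P n (j+1)))
      have e3 : |lam * (F₁ (u n (j+1)) - F₁ (u n j))| = lam * |F₁ (u n (j+1)) - F₁ (u n j)| := by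
        rw [abs_mul, abs_of_nonneg hlam0]
      have e4 : |lam * (F₂ (u n (j+2)) - F₂ (u n (j+3)))|
          = lam * |F₂ (u n (j+3)) - F₂ (u n (j+2))| := by
        rw [abs_mul, abs_of_nonneg hlam0, abs_sub_comm]
      have e5 : |γ*Δt*(P n (j+2) - P n (j+1))| ≤ γ*Δt*(Δx*K n) := by
        have ep : P n (j+2) - P n (j+1) = Δx * ((u n (j+1) + u n (j+2)) / 2) :=
          hPdiff n (j+1) (by omega)
        rw [ep]
        have hx := abs_le.mp (hKbound n (j+1) (by omega))
        have hy := abs_le.mp (hKbound n (j+2) (by omega))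
        have hc : (0:ℝ) ≤ γ*Δt*Δx := by positivity
        rw [abs_le]
        constructor <;>
          nlinarith [mul_le_mul_of_nonneg_left (add_le_add hx.2 hy.2) hc,
            mul_le_mul_of_nonneg_left (add_le_add hx.1 hy.1) hc]
      linarith
    have hsum : ∑ j ∈ Finset.range (m+1), |u (n+1) (j+2) - u (n+1) (j+1)| ≤
        (∑ j ∈ Finset.range (m+1), |G (u n (j+2)) - G (u n (j+1))|)
        + (∑ j ∈ Finset.range (m+1), lam * |F₁ (u n (j+1)) - F₁ (u n j)|)
        + (∑ j ∈ Finset.range (m+1), lam * |F₂ (u n (j+3)) - F₂ (u n (j+2))|)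
        + ((m:ℝ)+1) * (γ*Δt*(Δx*K n)) := by
      calc ∑ j ∈ Finset.range (m+1), |u (n+1) (j+2) - u (n+1) (j+1)|
          ≤ ∑ j ∈ Finset.range (m+1),
            (|G (u n (j+2)) - G (u n (j+1))| + lam * |F₁ (u n (j+1)) - F₁ (u n j)|
              + lam * |F₂ (u n (j+3)) - F₂ (u n (j+2))| + γ*Δt*(Δx*K n)) :=
          Finset.sum_le_sum fun j hj => hint j (by have := Finset.mem_range.mp hj; omega)
        _ = _ := by
          rw [Finset.sum_add_distrib, Finset.sum_add_distrib, Finset.sum_add_distrib,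
            Finset.sum_const, Finset.card_range, nsmul_eq_mul]
          push_cast
          ring
    have hinterior : ((m:ℝ)+1) * (γ*Δt*(Δx*K n)) ≤ γ*Δt*K n := by
      have h1 : ((m:ℝ)+1) * Δx ≤ 1 := by
        rw [hΔx', mul_one_div, div_le_one (by positivity)]
        linarith
      nlinarith [mul_le_mul_of_nonneg_right h1 (mul_nonneg hγΔt0 (hK0 n))]
    have hTVn1 : TV (n+1) =
        (∑ j ∈ Finset.range (m+1), |u (n+1) (j+2) - u (n+1) (j+1)|)
        + |u (n+1) 1 - u (n+1) 0| + |u (n+1) (m+3) - u (n+1) (m+2)| := by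
      simp only [hTVdef]
      exact hdecompMid (fun j => |u (n+1) (j+1) - u (n+1) j|)
    have hTVn : TV n =
        ((∑ j ∈ Finset.range (m+1), |G (u n (j+2)) - G (u n (j+1))|)
          + |G (u n 1) - G (u n 0)| + |G (u n (m+3)) - G (u n (m+2))|)
        + ((∑ j ∈ Finset.range (m+1), lam * |F₁ (u n (j+1)) - F₁ (u n j)|)
          + lam * |F₁ (u n (m+2)) - F₁ (u n (m+1))| + lam * |F₁ (u n (m+3)) - F₁ (u n (m+2))|)
        + ((∑ j ∈ Finset.range (m+1), lam * |F₂ (u n (j+3)) - F₂ (u n (j+2))|)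
          + lam * |F₂ (u n 1) - F₂ (u n 0)| + lam * |F₂ (u n 2) - F₂ (u n 1)|) := by
      have h1 : TV n = ∑ j ∈ Finset.range (m+3),
          (|G (u n (j+1)) - G (u n j)| + lam * |F₁ (u n (j+1)) - F₁ (u n j)|
            + lam * |F₂ (u n (j+1)) - F₂ (u n j)|) := by
        simp only [hTVdef]
        exact (Finset.sum_congr rfl fun j _ => (hkey (u n j) (u n (j+1))).symm)
      rw [h1, Finset.sum_add_distrib, Finset.sum_add_distrib,
        hdecompMid (fun j => |G (u n (j+1)) - G (u n j)|),
        hdecompTop (fun j => lam * |F₁ (u n (j+1)) - F₁ (u n j)|),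
        hdecompBot (fun j => lam * |F₂ (u n (j+1)) - F₂ (u n j)|)]
    rw [hTVn1, hTVn]
    linarith [h0, htop, hsum, hinterior]
  -- main induction
  have hmain : ∀ n, n ≤ M + 1 → TV n ≤ TV 0
      + (∑ k ∈ Finset.range n, |u (k+1) 0 - u k 0|)
      + (∑ k ∈ Finset.range n, |u (k+1) (m+3) - u k (m+3)|)
      + (n : ℝ) * (3*(γ*Δt) * ((1+γ*Δt)^(M+1) * (K 0 + A + B))) := by
    intro n
    induction n with
    | zero => intro _; simp
    | succ n ih =>
      intro hn
      have hn' : n ≤ M := by omega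
      have h1 := hstep n hn'
      have h2 := ih (by omega)
      have h3 : K n ≤ (1+γ*Δt)^(M+1) * (K 0 + A + B) := by
        calc K n ≤ (1+γ*Δt)^n * (K 0 + A + B) := hE n (by omega)
          _ ≤ (1+γ*Δt)^(M+1) * (K 0 + A + B) := by
            apply mul_le_mul_of_nonneg_right
              (pow_le_pow_right₀ (by linarith [hγΔt0]) (by omega))
            have := hK0 0; linarith
      have h4 : 3*(γ*Δt) * K n ≤ 3*(γ*Δt) * ((1+γ*Δt)^(M+1) * (K 0 + A + B)) :=
        mul_le_mul_of_nonneg_left h3 (by linarith [hγΔt0])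
      rw [Finset.sum_range_succ, Finset.sum_range_succ]
      push_cast
      linarith
  -- conclusion
  intro n hn
  have h1 := hmain n hn
  have hVa : (∑ k ∈ Finset.range n, |u (k+1) 0 - u k 0|) ≤ Vα := by
    refine le_trans ?_ hbvL
    apply Finset.sum_le_sum_of_subset_of_nonneg (Finset.range_subset_range.mpr (by omega))
    intro i _ _; positivity
  have hVb : (∑ k ∈ Finset.range n, |u (k+1) (m+3) - u k (m+3)|) ≤ Vβ := by
    refine le_trans ?_ hbvR
    apply Finset.sum_le_sum_of_subset_of_nonneg (Finset.range_subset_range.mpr (by omega))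
    intro i _ _; positivity
  have hS0 : (0:ℝ) ≤ K 0 + A + B := by have := hK0 0; linarith
  have hΔtT : Δt * ((M:ℝ)+1) = T := by rw [hΔt]; field_simp
  have hexp : (1+γ*Δt)^(M+1) ≤ Real.exp (γ*T) := by
    have h2 : (1+γ*Δt) ≤ Real.exp (γ*Δt) := by
      have := Real.add_one_le_exp (γ*Δt); linarith
    calc (1+γ*Δt)^(M+1) ≤ (Real.exp (γ*Δt))^(M+1) :=
        pow_le_pow_left₀ (by linarith [hγΔt0]) h2 _
      _ = Real.exp (((M:ℕ)+1 : ℕ) * (γ*Δt)) := (Real.exp_nat_mul _ _).symm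
      _ = Real.exp (γ*T) := by
        congr 1
        push_cast
        rw [← hΔtT]
        ring
  have h5 : (n:ℝ) * (3*(γ*Δt) * ((1+γ*Δt)^(M+1) * (K 0 + A + B)))
      ≤ 3*γ*T*Real.exp (γ*T) * (K 0 + A + B) := by
    have hp0 : (0:ℝ) ≤ (1+γ*Δt)^(M+1) := by positivity
    have h3γ : (0:ℝ) ≤ 3*(γ*Δt) := by linarith [hγΔt0]
    have hterm0 : (0:ℝ) ≤ 3*(γ*Δt) * ((1+γ*Δt)^(M+1) * (K 0 + A + B)) :=
      mul_nonneg h3γ (mul_nonneg hp0 hS0)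
    have hn1 : (n:ℝ) ≤ (M:ℝ)+1 := by exact_mod_cast hn
    have step1 : (n:ℝ) * (3*(γ*Δt) * ((1+γ*Δt)^(M+1) * (K 0 + A + B)))
        ≤ ((M:ℝ)+1) * (3*(γ*Δt) * ((1+γ*Δt)^(M+1) * (K 0 + A + B))) :=
      mul_le_mul_of_nonneg_right hn1 hterm0
    have step2 : (1+γ*Δt)^(M+1) * (K 0 + A + B) ≤ Real.exp (γ*T) * (K 0 + A + B) :=
      mul_le_mul_of_nonneg_right hexp hS0
    have step3 : ((M:ℝ)+1) * (3*(γ*Δt) * ((1+γ*Δt)^(M+1) * (K 0 + A + B)))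
        ≤ ((M:ℝ)+1) * (3*(γ*Δt) * (Real.exp (γ*T) * (K 0 + A + B))) := by
      apply mul_le_mul_of_nonneg_left _ (by positivity)
      exact mul_le_mul_of_nonneg_left step2 h3γ
    have heq : ((M:ℝ)+1) * (3*(γ*Δt) * (Real.exp (γ*T) * (K 0 + A + B)))
        = 3*γ*T*Real.exp (γ*T) * (K 0 + A + B) := by
      rw [← hΔtT]; ring
    linarith
  have hCT1 : (1:ℝ) ≤ max 1 (3*γ*T*Real.exp (γ*T)) := le_max_left _ _
  have hCT2 : 3*γ*T*Real.exp (γ*T) ≤ max 1 (3*γ*T*Real.exp (γ*T)) := le_max_right _ _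
  have hTV0 : (0:ℝ) ≤ TV 0 := Finset.sum_nonneg fun j _ => abs_nonneg _
  have hgoal : TV n ≤ max 1 (3*γ*T*Real.exp (γ*T)) * (TV 0 + Vα + Vβ + K 0 + A + B) := by
    have c1 : TV 0 + Vα + Vβ ≤ max 1 (3*γ*T*Real.exp (γ*T)) * (TV 0 + Vα + Vβ) :=
      le_mul_of_one_le_left (by linarith) hCT1
    have c2 : 3*γ*T*Real.exp (γ*T) * (K 0+A+B)
        ≤ max 1 (3*γ*T*Real.exp (γ*T)) * (K 0+A+B) :=
      mul_le_mul_of_nonneg_right hCT2 hS0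
    nlinarith [h1, hVa, hVb, h5, c1, c2]
  exact hgoal
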